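/- arXiv:2602.09639 — 2 statements merged into one kernel-verified Lean document; each statement's English description precedes it below -/
import Mathlib

section
/- Let $p_X$ be a compactly supported probability measure on $\mathbb{R}^d$, and for $\omega > 0$ let $q_\omega(\cdot|y)$ be the posterior $q_\omega(dx|y) \propto e^{-\|x-y\|^2/(2\omega^2)} p_X(dx)$. Then $\partial_\omega(\omega^2 \nabla \log p_\omega(y)) = \omega^{-3}\,\mathrm{Cov}_{q_\omega}(X, \|X - y\|^2 \mid Y = y)$, where $p_\omega = p_X * \mathcal{N}(0,\omega^2 I)$ and the covariance is the vector of covariances of each coordinate of $X$ with the scalar $\|X - y\|^2$. -/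
open MeasureTheory Real

/-- Isotropic Gaussian density with variance `ω²` in dimension `d`. -/
noncomputable def gaussDensity (d : ℕ) (ω : ℝ) (v : EuclideanSpace ℝ (Fin d)) : ℝ :=
  (2 * π * ω ^ 2) ^ (-(d : ℝ) / 2) * Real.exp (-‖v‖ ^ 2 / (2 * ω ^ 2))

/-- Posterior weight `e^{-‖x-y‖²/(2ω²)}`. -/
noncomputable def wgt {d : ℕ} (ω : ℝ) (y x : EuclideanSpace ℝ (Fin d)) : ℝ :=
  Real.exp (-‖x - y‖ ^ 2 / (2 * ω ^ 2))

/-- Posterior mean `E_{q_ω}[X | Y = y]`. -/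
noncomputable def postMean {d : ℕ} (pX : Measure (EuclideanSpace ℝ (Fin d))) (ω : ℝ)
    (y : EuclideanSpace ℝ (Fin d)) : EuclideanSpace ℝ (Fin d) :=
  (∫ x, wgt ω y x ∂pX)⁻¹ • ∫ x, wgt ω y x • x ∂pX

/-- The vector of posterior covariances `Cov_{q_ω}(X, ‖X - y‖² | Y = y)`. -/
noncomputable def postCrossCov {d : ℕ} (pX : Measure (EuclideanSpace ℝ (Fin d))) (ω : ℝ)
    (y : EuclideanSpace ℝ (Fin d)) : EuclideanSpace ℝ (Fin d) :=
  ((∫ x, wgt ω y x ∂pX)⁻¹ • ∫ x, (wgt ω y x * ‖x - y‖ ^ 2) • x ∂pX)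
    - ((∫ x, wgt ω y x ∂pX)⁻¹ * ∫ x, wgt ω y x * ‖x - y‖ ^ 2 ∂pX) • postMean pX ω y

section Aux

variable {d : ℕ}

lemma wgt_cont (w : ℝ) (y : EuclideanSpace ℝ (Fin d)) : Continuous (wgt w y) := by
  unfold wgt; fun_prop

lemma wgt_pos (w : ℝ) (y x : EuclideanSpace ℝ (Fin d)) : 0 < wgt w y x := Real.exp_pos _

lemma wgt_le_one (w : ℝ) (y x : EuclideanSpace ℝ (Fin d)) : wgt w y x ≤ 1 := by
  unfold wgt
  rw [Real.exp_le_one_iff, neg_div]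
  exact neg_nonpos_of_nonneg (div_nonneg (by positivity) (by positivity))

lemma wgt_hasDerivAt {w : ℝ} (hw : w ≠ 0) (y x : EuclideanSpace ℝ (Fin d)) :
    HasDerivAt (fun w => wgt w y x) ((w ^ 3)⁻¹ * (wgt w y x * ‖x - y‖ ^ 2)) w := by
  have h : HasDerivAt (fun w : ℝ => -‖x - y‖ ^ 2 / (2 * w ^ 2))
      ((0 * (2 * w ^ 2) - (-‖x - y‖ ^ 2) * (2 * (2 * w))) / (2 * w ^ 2) ^ 2) w :=
    (hasDerivAt_const w (-‖x - y‖ ^ 2)).div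
      (((hasDerivAt_pow 2 w).const_mul 2).congr_deriv (by ring)) (by positivity)
  have := h.exp
  refine this.congr_deriv ?_
  change wgt w y x * ((0 * (2 * w ^ 2) - -‖x - y‖ ^ 2 * (2 * (2 * w))) / (2 * w ^ 2) ^ 2)
    = (w ^ 3)⁻¹ * (wgt w y x * ‖x - y‖ ^ 2)
  field_simp
  ring

lemma wgt_hasFDerivAt (w : ℝ) (x z : EuclideanSpace ℝ (Fin d)) :
    HasFDerivAt (fun z => wgt w z x)
      ((wgt w z x * (w ^ 2)⁻¹) • (innerSL ℝ (x - z))) z := by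
  have h1 : HasFDerivAt (fun z : EuclideanSpace ℝ (Fin d) => x - z)
      (-(ContinuousLinearMap.id ℝ _)) z := (hasFDerivAt_id z).const_sub x
  have h2 : HasFDerivAt (fun z : EuclideanSpace ℝ (Fin d) => ‖x - z‖ ^ 2)
      ((2 • (innerSL ℝ (x - z))).comp (-(ContinuousLinearMap.id ℝ _))) z :=
    h1.norm_sq
  have hfun : (fun z : EuclideanSpace ℝ (Fin d) => wgt w z x)
      = fun z => Real.exp ((-(2 * w ^ 2)⁻¹) * ‖x - z‖ ^ 2) := by
    funext z; unfold wgt; congr 1; ring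
  rw [hfun]
  have := ((h2.const_mul (-(2 * w ^ 2)⁻¹)).exp)
  refine this.congr_fderiv ?_
  ext u
  simp [wgt]
  rw [show -‖x - z‖ ^ 2 / (2 * w ^ 2) = -((w ^ 2)⁻¹ * 2⁻¹ * ‖x - z‖ ^ 2) by ring]
  ring

variable (pX : Measure (EuclideanSpace ℝ (Fin d))) [IsProbabilityMeasure pX]

lemma wgt_integrable (w : ℝ) (y : EuclideanSpace ℝ (Fin d)) : Integrable (wgt w y) pX := by
  refine (integrable_const (1 : ℝ)).mono' (wgt_cont w y).aestronglyMeasurable ?_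
  filter_upwards with x
  rw [Real.norm_eq_abs, abs_of_pos (wgt_pos w y x)]
  exact wgt_le_one w y x

lemma wgt_integral_pos (w : ℝ) (y : EuclideanSpace ℝ (Fin d)) :
    0 < ∫ x, wgt w y x ∂pX := by
  rw [integral_pos_iff_support_of_nonneg (fun x => (wgt_pos w y x).le) (wgt_integrable pX w y)]
  have : Function.support (wgt w y) = Set.univ := by
    ext x; simp [Function.support, (wgt_pos w y x).ne']
  rw [this]
  simp

end Aux

section Key

variable {d : ℕ} (pX : Measure (EuclideanSpace ℝ (Fin d))) [IsProbabilityMeasure pX]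

lemma key_gradient {K : Set (EuclideanSpace ℝ (Fin d))} (hK : IsCompact K) (hK0 : pX Kᶜ = 0)
    {w : ℝ} (hw : 0 < w) (y : EuclideanSpace ℝ (Fin d)) :
    w ^ 2 • gradient (fun z => Real.log (∫ x, gaussDensity d w (z - x) ∂pX)) y
      = (∫ x, wgt w y x ∂pX)⁻¹ • ∫ x, wgt w y x • x ∂pX - y := by
  classical
  -- bounds from compactness
  obtain ⟨r₀, hr₀⟩ := hK.isBounded.subset_closedBall y
  set r := max r₀ 0 with hrdef
  have hrK : ∀ x ∈ K, ‖x - y‖ ≤ r := by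
    intro x hx
    have := hr₀ hx
    rw [Metric.mem_closedBall, dist_eq_norm] at this
    exact this.trans (le_max_left _ _)
  have haeK : ∀ᵐ x ∂pX, x ∈ K := by
    rw [ae_iff]
    exact hK0
  set N := ∫ x, wgt w y x ∂pX with hN
  set V := ∫ x, wgt w y x • x ∂pX with hV
  have hNpos : 0 < N := wgt_integral_pos pX w y
  have hNint : Integrable (wgt w y) pX := wgt_integrable pX w y
  have hVint : Integrable (fun x => wgt w y x • x) pX := by
    refine (integrable_const (r + ‖y‖)).mono' ?_ ?_
    · exact ((wgt_cont w y).smul continuous_id).aestronglyMeasurable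
    · filter_upwards [haeK] with x hx
      rw [norm_smul, Real.norm_eq_abs, abs_of_pos (wgt_pos w y x)]
      calc wgt w y x * ‖x‖ ≤ 1 * ‖x‖ :=
            mul_le_mul_of_nonneg_right (wgt_le_one w y x) (norm_nonneg _)
        _ = ‖(x - y) + y‖ := by rw [one_mul]; congr 1; abel
        _ ≤ ‖x - y‖ + ‖y‖ := norm_add_le _ _
        _ ≤ r + ‖y‖ := by linarith [hrK x hx]
  have hGint : Integrable (fun x => wgt w y x • (x - y)) pX := by
    refine (integrable_const r).mono' ?_ ?_
    · exact ((wgt_cont w y).smul (continuous_id.sub continuous_const)).aestronglyMeasurable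
    · filter_upwards [haeK] with x hx
      rw [norm_smul, Real.norm_eq_abs, abs_of_pos (wgt_pos w y x)]
      calc wgt w y x * ‖x - y‖ ≤ 1 * ‖x - y‖ := by
            exact mul_le_mul_of_nonneg_right (wgt_le_one w y x) (norm_nonneg _)
        _ ≤ r := by rw [one_mul]; exact hrK x hx
  set G := ∫ x, wgt w y x • (x - y) ∂pX with hG
  -- derivative of z ↦ ∫ wgt w z x under the integral
  set F' : EuclideanSpace ℝ (Fin d) → EuclideanSpace ℝ (Fin d) →
      (EuclideanSpace ℝ (Fin d) →L[ℝ] ℝ) :=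
    fun z x => (wgt w z x * (w ^ 2)⁻¹) • innerSL ℝ (x - z) with hF'
  have hF'normle : ∀ z x, ‖F' z x‖ ≤ (w ^ 2)⁻¹ * ‖x - z‖ := by
    intro z x
    rw [hF']
    simp only
    rw [norm_smul (wgt w z x * (w ^ 2)⁻¹) (innerSL ℝ (x - z)), Real.norm_eq_abs,
      innerSL_apply_norm, abs_of_pos (mul_pos (wgt_pos w z x) (by positivity))]
    refine mul_le_mul_of_nonneg_right ?_ (norm_nonneg _)
    calc wgt w z x * (w ^ 2)⁻¹ ≤ 1 * (w ^ 2)⁻¹ :=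
          mul_le_mul_of_nonneg_right (wgt_le_one w z x) (by positivity)
      _ = (w ^ 2)⁻¹ := one_mul _
  have hF'cont : Continuous (F' y) := by
    rw [hF']
    exact ((wgt_cont w y).mul continuous_const).smul
      ((innerSL ℝ).continuous.comp (continuous_id.sub continuous_const))
  have hF'int : Integrable (F' y) pX := by
    refine (integrable_const ((w ^ 2)⁻¹ * r)).mono' hF'cont.aestronglyMeasurable ?_
    filter_upwards [haeK] with x hx
    exact (hF'normle y x).trans (mul_le_mul_of_nonneg_left (hrK x hx) (by positivity))
  have hNz : HasFDerivAt (fun z => ∫ x, wgt w z x ∂pX) (∫ x, F' y x ∂pX) y := by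
    apply hasFDerivAt_integral_of_dominated_of_fderiv_le (Metric.ball_mem_nhds y one_pos)
    · filter_upwards with z
      exact (wgt_cont w z).aestronglyMeasurable
    · exact hNint
    · exact hF'cont.aestronglyMeasurable
    · filter_upwards [haeK] with x hx z hz
      refine (hF'normle z x).trans ?_
      have : ‖x - z‖ ≤ r + 1 := by
        calc ‖x - z‖ = ‖(x - y) + (y - z)‖ := by abel_nf
          _ ≤ ‖x - y‖ + ‖y - z‖ := norm_add_le _ _
          _ ≤ r + 1 := by
              refine add_le_add (hrK x hx) ?_
              rw [Metric.mem_ball, dist_comm, dist_eq_norm] at hz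
              exact le_of_lt (by simpa [norm_sub_rev] using hz)
      exact mul_le_mul_of_nonneg_left this (by positivity)
    · exact integrable_const _
    · filter_upwards with x z _
      exact wgt_hasFDerivAt w x z
  -- identify the derivative with toDual of a vector
  have hEq : (∫ x, F' y x ∂pX)
      = InnerProductSpace.toDual ℝ _ ((w ^ 2)⁻¹ • G) := by
    apply ContinuousLinearMap.ext
    intro u
    rw [ContinuousLinearMap.integral_apply hF'int, InnerProductSpace.toDual_apply_apply,
      real_inner_smul_left, hG, real_inner_comm, ← integral_inner hGint u]
    rw [← integral_const_mul]
    congr 1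
    funext x
    rw [hF']
    simp only [ContinuousLinearMap.smul_apply, innerSL_apply_apply, smul_eq_mul,
      real_inner_smul_right]
    rw [real_inner_comm]
    ring
  -- pull the Gaussian constant out
  set c : ℝ := (2 * π * w ^ 2) ^ (-(d : ℝ) / 2) with hc
  have hcpos : 0 < c := Real.rpow_pos_of_pos (by positivity) _
  have hpfun : (fun z => ∫ x, gaussDensity d w (z - x) ∂pX)
      = fun z => c * ∫ x, wgt w z x ∂pX := by
    funext z
    rw [← integral_const_mul]
    congr 1; funext x
    unfold gaussDensity wgt
    rw [norm_sub_rev]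
  have hP : HasFDerivAt (fun z => c * ∫ x, wgt w z x ∂pX)
      (c • ∫ x, F' y x ∂pX) y := hNz.const_mul c
  have hlog := (Real.hasDerivAt_log (ne_of_gt (mul_pos hcpos hNpos))).comp_hasFDerivAt y hP
  rw [hEq] at hlog
  have hgrad : HasGradientAt (fun z => Real.log (∫ x, gaussDensity d w (z - x) ∂pX))
      ((N⁻¹ * (w ^ 2)⁻¹) • G) y := by
    rw [hasGradientAt_iff_hasFDerivAt]
    have hfe : (fun z => Real.log (∫ x, gaussDensity d w (z - x) ∂pX))
        = Real.log ∘ fun z => c * ∫ x, wgt w z x ∂pX := by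
      funext z
      simp only [Function.comp_apply]
      rw [congrFun hpfun z]
    rw [hfe]
    refine hlog.congr_fderiv ?_
    rw [_root_.map_smul, _root_.map_smul, smul_smul, smul_smul]
    congr 1
    field_simp
  rw [hgrad.gradient]
  have hGVN : G = V - N • y := by
    have heq2 : (fun x => wgt w y x • (x - y))
        = fun x => wgt w y x • x - wgt w y x • y := by
      funext x; rw [smul_sub]
    rw [hG, heq2, integral_sub hVint (hNint.smul_const y), integral_smul_const, ← hV, ← hN]
  rw [hGVN, smul_smul]
  have h1 : w ^ 2 * (N⁻¹ * (w ^ 2)⁻¹) = N⁻¹ := by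
    rw [mul_comm N⁻¹, ← mul_assoc, mul_inv_cancel₀ (by positivity : (w : ℝ) ^ 2 ≠ 0), one_mul]
  rw [h1, smul_sub, smul_smul, inv_mul_cancel₀ hNpos.ne', one_smul]

end Key

/-- `∂_ω (ω² ∇ log p_ω(y)) = ω⁻³ Cov_{q_ω}(X, ‖X - y‖² | Y = y)`. -/
theorem stmt7 {d : ℕ} (pX : Measure (EuclideanSpace ℝ (Fin d)))
    [IsProbabilityMeasure pX]
    (hsupp : ∃ K : Set (EuclideanSpace ℝ (Fin d)), IsCompact K ∧ pX Kᶜ = 0)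
    (ω : ℝ) (hω : 0 < ω) (y : EuclideanSpace ℝ (Fin d)) :
    HasDerivAt
      (fun w : ℝ => w ^ 2 • gradient (fun z => Real.log (∫ x, gaussDensity d w (z - x) ∂pX)) y)
      ((ω ^ 3)⁻¹ • postCrossCov pX ω y) ω := by
  obtain ⟨K, hK, hK0⟩ := hsupp
  obtain ⟨r₀, hr₀⟩ := hK.isBounded.subset_closedBall y
  set r := max r₀ 0 with hrdef
  have hrK : ∀ x ∈ K, ‖x - y‖ ≤ r := by
    intro x hx
    have := hr₀ hx
    rw [Metric.mem_closedBall, dist_eq_norm] at this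
    exact this.trans (le_max_left _ _)
  have hr0 : 0 ≤ r := le_max_right _ _
  have haeK : ∀ᵐ x ∂pX, x ∈ K := by
    rw [ae_iff]; exact hK0
  have hxnorm : ∀ x ∈ K, ‖x‖ ≤ r + ‖y‖ := by
    intro x hx
    calc ‖x‖ = ‖(x - y) + y‖ := by congr 1; abel
      _ ≤ ‖x - y‖ + ‖y‖ := norm_add_le _ _
      _ ≤ r + ‖y‖ := by linarith [hrK x hx]
  -- facts about points in the ball around ω
  have hball : ∀ w' ∈ Metric.ball ω (ω / 2), ω / 2 < w' := by
    intro w' hw'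
    rw [Metric.mem_ball, Real.dist_eq, abs_lt] at hw'
    linarith [hw'.1]
  have hcube : ∀ w' ∈ Metric.ball ω (ω / 2), ((w' : ℝ) ^ 3)⁻¹ ≤ ((ω / 2) ^ 3)⁻¹ := by
    intro w' hw'
    have h1 : (0 : ℝ) < (ω / 2) ^ 3 := by positivity
    have h2 : (ω / 2) ^ 3 ≤ w' ^ 3 :=
      pow_le_pow_left₀ (by positivity) (hball w' hw').le 3
    exact inv_anti₀ h1 h2
  -- derivative of N
  have hNd : HasDerivAt (fun w => ∫ x, wgt w y x ∂pX)
      ((ω ^ 3)⁻¹ * ∫ x, wgt ω y x * ‖x - y‖ ^ 2 ∂pX) ω := by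
    rw [← integral_const_mul]
    refine (hasDerivAt_integral_of_dominated_loc_of_deriv_le (s := Metric.ball ω (ω / 2))
      (F' := fun (w : ℝ) (x : EuclideanSpace ℝ (Fin d)) =>
        (w ^ 3)⁻¹ * (wgt w y x * ‖x - y‖ ^ 2))
      (bound := fun _ => ((ω / 2) ^ 3)⁻¹ * r ^ 2)
      (Metric.ball_mem_nhds ω (by positivity)) ?_ ?_ ?_ ?_ ?_ ?_).2
    · filter_upwards with w
      exact (wgt_cont w y).aestronglyMeasurable
    · exact wgt_integrable pX ω y
    · exact (continuous_const.mul ((wgt_cont ω y).mul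
        (((continuous_id.sub continuous_const).norm).pow 2))).aestronglyMeasurable
    · filter_upwards [haeK] with x hx w' hw'
      have hw'pos : (0 : ℝ) < w' := lt_trans (by positivity) (hball w' hw')
      rw [Real.norm_eq_abs, abs_of_nonneg (mul_nonneg (by positivity)
        (mul_nonneg (wgt_pos w' y x).le (by positivity)))]
      calc (w' ^ 3)⁻¹ * (wgt w' y x * ‖x - y‖ ^ 2)
          ≤ (w' ^ 3)⁻¹ * (1 * r ^ 2) := by
            refine mul_le_mul_of_nonneg_left ?_ (by positivity)
            exact mul_le_mul (wgt_le_one w' y x)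
              (by nlinarith [hrK x hx, norm_nonneg (x - y)]) (by positivity) one_pos.le
        _ ≤ ((ω / 2) ^ 3)⁻¹ * r ^ 2 := by
            rw [one_mul]
            exact mul_le_mul_of_nonneg_right (hcube w' hw') (by positivity)
    · exact integrable_const _
    · filter_upwards with x w' hw'
      exact wgt_hasDerivAt (by linarith [hball w' hw'] : w' ≠ 0) y x
  have hVd : HasDerivAt (fun w => ∫ x, wgt w y x • x ∂pX)
      ((ω ^ 3)⁻¹ • ∫ x, (wgt ω y x * ‖x - y‖ ^ 2) • x ∂pX) ω := by
    rw [← integral_smul]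
    refine (hasDerivAt_integral_of_dominated_loc_of_deriv_le (s := Metric.ball ω (ω / 2))
      (F' := fun (w : ℝ) (x : EuclideanSpace ℝ (Fin d)) =>
        (w ^ 3)⁻¹ • ((wgt w y x * ‖x - y‖ ^ 2) • x))
      (bound := fun _ => ((ω / 2) ^ 3)⁻¹ * (r ^ 2 * (r + ‖y‖)))
      (Metric.ball_mem_nhds ω (by positivity)) ?_ ?_ ?_ ?_ ?_ ?_).2
    · filter_upwards with w
      exact ((wgt_cont w y).smul continuous_id).aestronglyMeasurable
    · refine (integrable_const (r + ‖y‖)).mono'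
        ((wgt_cont ω y).smul continuous_id).aestronglyMeasurable ?_
      filter_upwards [haeK] with x hx
      rw [norm_smul, Real.norm_eq_abs, abs_of_pos (wgt_pos ω y x)]
      calc wgt ω y x * ‖x‖ ≤ 1 * ‖x‖ :=
            mul_le_mul_of_nonneg_right (wgt_le_one ω y x) (norm_nonneg _)
        _ ≤ r + ‖y‖ := by rw [one_mul]; exact hxnorm x hx
    · exact ((continuous_const : Continuous fun _ : EuclideanSpace ℝ (Fin d) => ((ω ^ 3)⁻¹ : ℝ)).smul (((wgt_cont ω y).mul
        (((continuous_id.sub continuous_const).norm).pow 2)).smul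
          continuous_id)).aestronglyMeasurable
    · filter_upwards [haeK] with x hx w' hw'
      have hw'pos : (0 : ℝ) < w' := lt_trans (by positivity) (hball w' hw')
      rw [norm_smul, norm_smul, Real.norm_eq_abs, Real.norm_eq_abs,
        abs_of_nonneg (by positivity : (0 : ℝ) ≤ (w' ^ 3)⁻¹),
        abs_of_nonneg (mul_nonneg (wgt_pos w' y x).le (by positivity))]
      calc (w' ^ 3)⁻¹ * (wgt w' y x * ‖x - y‖ ^ 2 * ‖x‖)
          ≤ (w' ^ 3)⁻¹ * (r ^ 2 * (r + ‖y‖)) := by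
            refine mul_le_mul_of_nonneg_left ?_ (by positivity)
            have hs : ‖x - y‖ ^ 2 ≤ r ^ 2 := by nlinarith [hrK x hx, norm_nonneg (x - y)]
            have h1 : wgt w' y x * ‖x - y‖ ^ 2 ≤ r ^ 2 := by
              nlinarith [wgt_le_one w' y x, (wgt_pos w' y x).le, sq_nonneg ‖x - y‖]
            exact mul_le_mul h1 (hxnorm x hx) (norm_nonneg x) (by positivity)
        _ ≤ ((ω / 2) ^ 3)⁻¹ * (r ^ 2 * (r + ‖y‖)) :=
            mul_le_mul_of_nonneg_right (hcube w' hw') (by positivity)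
    · exact integrable_const _
    · filter_upwards with x w' hw'
      have hne : w' ≠ 0 := ne_of_gt (lt_trans (by positivity) (hball w' hw'))
      have := (wgt_hasDerivAt hne y x).smul_const x
      convert this using 1
      rw [smul_smul]
  have hNpos : 0 < ∫ x, wgt ω y x ∂pX := wgt_integral_pos pX ω y
  have hInv := hNd.inv hNpos.ne'
  have hsm := hInv.smul hVd
  have hfinal := hsm.sub_const y
  have hEv : (fun w : ℝ => w ^ 2 •
        gradient (fun z => Real.log (∫ x, gaussDensity d w (z - x) ∂pX)) y)
      =ᶠ[nhds ω] fun w => (∫ x, wgt w y x ∂pX)⁻¹ • (∫ x, wgt w y x • x ∂pX) - y := by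
    filter_upwards [Ioi_mem_nhds hω] with w hw
    exact key_gradient pX hK hK0 hw y
  have hmain := hfinal.congr_of_eventuallyEq hEv
  refine hmain.congr_deriv ?_
  unfold postCrossCov postMean
  module
end

section
/- Let $\Theta(\omega) = c\,\omega^{-3}$ on $[\sigma_T, \sigma_0]$ with normalizing constant $c = 2/(\sigma_T^{-2} - \sigma_0^{-2})$, and let $\mathsf{a} \in (0,1)$, $\sigma(t) = \sigma_0 e^{-(1-\mathsf{a})t}$, $a(t) = \mathsf{a}\sigma(t)^2$, $T = \frac{1}{1-\mathsf{a}}\log(\sigma_0/\sigma_T)$. Then for any nonnegative measurable $\varepsilon$, $\int_0^T \frac{\varepsilon(\sigma(t))^2}{a(t)}\,dt = \frac{1}{c\,\mathsf{a}(1-\mathsf{a})} \int_{\sigma_T}^{\sigma_0} \varepsilon(\omega)^2\,\Theta(\omega)\,d\omega$, i.e., the time-integrated score error is exactly proportional to the $\Theta$-averaged squared error. -/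
open Real intervalIntegral

/-- For the prior `Θ(ω) = c ω⁻³` on `[σ_T, σ₀]` with `c = 2/(σ_T⁻² - σ₀⁻²)`, and the
exponential schedule `σ(t) = σ₀ e^{-(1-a)t}`, `a(t) = a σ(t)²`, `T = (1-a)⁻¹ log(σ₀/σ_T)`,
the time-integrated score error is exactly proportional to the `Θ`-averaged squared error:
`∫₀ᵀ ε(σ(t))²/a(t) dt = (c a (1-a))⁻¹ ∫_{σ_T}^{σ₀} ε(ω)² Θ(ω) dω`. -/
theorem stmt14 (a σ0 σT : ℝ) (ha : a ∈ Set.Ioo (0:ℝ) 1) (hσT : 0 < σT) (hlt : σT < σ0)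
    (ε : ℝ → ℝ) (hεmeas : Measurable ε) (hεpos : ∀ ω, 0 ≤ ε ω) :
    (∫ t in (0:ℝ)..((1 - a)⁻¹ * Real.log (σ0 / σT)),
        ε (σ0 * Real.exp (-(1 - a) * t)) ^ 2 / (a * (σ0 * Real.exp (-(1 - a) * t)) ^ 2))
      = (2 / ((σT ^ 2)⁻¹ - (σ0 ^ 2)⁻¹) * a * (1 - a))⁻¹
        * ∫ ω in σT..σ0, ε ω ^ 2 * (2 / ((σT ^ 2)⁻¹ - (σ0 ^ 2)⁻¹) * (ω ^ 3)⁻¹) := by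
  obtain ⟨ha0, ha1⟩ := ha
  have hb : (0:ℝ) < 1 - a := by linarith
  have hσ0 : (0:ℝ) < σ0 := hσT.trans hlt
  set b : ℝ := 1 - a with hbdef
  set T : ℝ := b⁻¹ * Real.log (σ0 / σT) with hTdef
  have hrat : (1:ℝ) < σ0 / σT := (one_lt_div hσT).2 hlt
  have hT : 0 < T := mul_pos (inv_pos.2 hb) (Real.log_pos hrat)
  set f : ℝ → ℝ := fun t => σ0 * Real.exp (-b * t) with hf
  have hfT : f T = σT := by
    have : -b * T = -Real.log (σ0 / σT) := by
      rw [hTdef]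
      field_simp
    rw [hf]
    simp only [this, Real.exp_neg, Real.exp_log (div_pos hσ0 hσT)]
    field_simp
  -- image
  have himg : f '' Set.Ioo 0 T = Set.Ioo σT σ0 := by
    ext ω
    constructor
    · rintro ⟨t, ⟨ht0, htT⟩, rfl⟩
      constructor
      · rw [← hfT]
        exact mul_lt_mul_of_pos_left (Real.exp_lt_exp.2 (by nlinarith)) hσ0
      · calc σ0 * Real.exp (-b * t) < σ0 * 1 := by
              exact mul_lt_mul_of_pos_left (by
                rw [← Real.exp_zero]; exact Real.exp_lt_exp.2 (by nlinarith)) hσ0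
            _ = σ0 := mul_one σ0
    · rintro ⟨h1, h2⟩
      have hω : 0 < ω := hσT.trans h1
      refine ⟨b⁻¹ * Real.log (σ0 / ω), ⟨?_, ?_⟩, ?_⟩
      · exact mul_pos (inv_pos.2 hb) (Real.log_pos ((one_lt_div hω).2 h2))
      · have : Real.log (σ0 / ω) < Real.log (σ0 / σT) :=
          Real.log_lt_log (div_pos hσ0 hω) (by
            exact div_lt_div_of_pos_left hσ0 hσT h1)
        exact mul_lt_mul_of_pos_left this (inv_pos.2 hb)
      · have : -b * (b⁻¹ * Real.log (σ0 / ω)) = -Real.log (σ0 / ω) := by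
          field_simp
        rw [hf]
        simp only [this, Real.exp_neg, Real.exp_log (div_pos hσ0 hω)]
        field_simp
  -- injectivity
  have hinj : Set.InjOn f (Set.Ioo 0 T) := by
    intro s hs t ht hst
    have := mul_left_cancel₀ (ne_of_gt hσ0) hst
    have := Real.exp_injective this
    exact mul_left_cancel₀ (neg_ne_zero.2 hb.ne') this
  -- derivative
  have hderiv : ∀ t ∈ Set.Ioo (0:ℝ) T, HasDerivWithinAt f (-b * f t) (Set.Ioo 0 T) t := by
    intro t ht
    have h1 : HasDerivAt (fun t : ℝ => -b * t) (-b) t := by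
      simpa using (hasDerivAt_id t).const_mul (-b)
    have h2 : HasDerivAt f (σ0 * (Real.exp (-b * t) * (-b))) t :=
      (h1.exp.const_mul σ0)
    have : σ0 * (Real.exp (-b * t) * (-b)) = -b * f t := by rw [hf]; ring
    exact (this ▸ h2).hasDerivWithinAt
  -- change of variables
  have key := MeasureTheory.integral_image_eq_integral_abs_deriv_smul
      (measurableSet_Ioo) hderiv hinj (fun ω => ε ω ^ 2 / (a * b * ω ^ 3))
  rw [himg] at key
  -- convert interval integrals to Ioo set integrals
  rw [intervalIntegral.integral_of_le hT.le, intervalIntegral.integral_of_le hlt.le,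
    MeasureTheory.integral_Ioc_eq_integral_Ioo, MeasureTheory.integral_Ioc_eq_integral_Ioo]
  -- rewrite LHS integrand as |f'| • g ∘ f
  have habs : ∀ t ∈ Set.Ioo (0:ℝ) T, |(-b) * f t| = b * f t := by
    intro t ht
    have hft : 0 < f t := mul_pos hσ0 (Real.exp_pos _)
    rw [abs_of_neg (by nlinarith), neg_mul, neg_neg]
  have hLHS : ∫ t in Set.Ioo (0:ℝ) T,
      ε (σ0 * Real.exp (-(1 - a) * t)) ^ 2 / (a * (σ0 * Real.exp (-(1 - a) * t)) ^ 2)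
      = ∫ t in Set.Ioo (0:ℝ) T, |(-b) * f t| • (ε (f t) ^ 2 / (a * b * (f t) ^ 3)) := by
    apply MeasureTheory.setIntegral_congr_fun measurableSet_Ioo
    intro t ht
    simp only
    rw [habs t ht]
    have hft : 0 < f t := mul_pos hσ0 (Real.exp_pos _)
    have : σ0 * Real.exp (-(1 - a) * t) = f t := by rw [hf, hbdef]
    rw [this]
    rw [smul_eq_mul]
    field_simp
  rw [hLHS, ← key]
  -- now RHS side: pull out constants
  have hc : (0:ℝ) < (σT ^ 2)⁻¹ - (σ0 ^ 2)⁻¹ := by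
    have : (σ0 ^ 2)⁻¹ < (σT ^ 2)⁻¹ := by
      apply inv_strictAnti₀ (by positivity)
      nlinarith
    linarith
  set c : ℝ := 2 / ((σT ^ 2)⁻¹ - (σ0 ^ 2)⁻¹) with hcdef
  have hcpos : 0 < c := by positivity
  rw [← MeasureTheory.integral_const_mul]
  apply MeasureTheory.setIntegral_congr_fun measurableSet_Ioo
  intro ω hω
  have hωpos : 0 < ω := hσT.trans hω.1
  field_simp
end
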